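/- Suppose λ = 0 and the surjectivity condition (∗∗) holds: for every i ∈ {0,…,N} and every τ ∈ ℂ, Σ_{j≠i} im B_j + im(B_i + τ·1_m) = ℂ^m. Define φ: (ℂ^m)^{N+1} → ℂ^m by φ(v_0,…,v_N) = Σ_{j=0}^N B_j v_j. Then φ is surjective, ker φ = K + L, and φ intertwines the actions: φ ∘ F_j = B_j ∘ φ for 1 ≤ j ≤ N and φ ∘ F_∞ = B_∞ ∘ φ, where B_∞ = 1_m − Σ_{i=1}^N B_i − B_0. Hence the quotient module (ℂ^m)^{N+1}/(K+L) with the induced actions of F_1,…,F_N,F_∞ is isomorphic to ℂ^m with the actions of B_1,…,B_N,B_∞. -/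
import Mathlib


/-- Case `λ = 0` with condition `(∗∗)`: the map `φ(v) = Σ_j B_j v_j` is surjective,
`ker φ = K + L`, `φ` intertwines `F_j` with `B_j` and `F_∞` with `B_∞`, and hence
`ℂ^{(N+1)m}/(K+L) ≅ ℂ^m`. -/
theorem qmc_mc0_iso (m N : ℕ)
    (Bl : Fin N → Matrix (Fin m) (Fin m) ℂ) (Binf : Matrix (Fin m) (Fin m) ℂ)
    (B : Fin (N + 1) → Matrix (Fin m) (Fin m) ℂ)
    (hB : B = Fin.cons (1 - ∑ i, Bl i - Binf) Bl)
    (hstar2 : ∀ i : Fin (N + 1), ∀ τ : ℂ,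
      (⨆ j, ⨆ _ : j ≠ i, LinearMap.range (B j).mulVecLin) ⊔
        LinearMap.range (B i + τ • (1 : Matrix (Fin m) (Fin m) ℂ)).mulVecLin = ⊤)
    (φ : (Fin (N + 1) → Fin m → ℂ) →ₗ[ℂ] (Fin m → ℂ))
    (hφ : ∀ v, φ v = ∑ j, (B j).mulVec (v j))
    (F : Fin N → (Fin (N + 1) → Fin m → ℂ) → (Fin (N + 1) → Fin m → ℂ))
    (hF : ∀ k v, F k v = fun r =>
      if r = k.succ then (∑ j, (B j).mulVec (v j)) else 0)
    (Fhat : (Fin (N + 1) → Fin m → ℂ) →ₗ[ℂ] (Fin (N + 1) → Fin m → ℂ))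
    (hFhat : ∀ v, Fhat v = fun _ => ∑ j, (B j).mulVec (v j))
    (Finf : (Fin (N + 1) → Fin m → ℂ) → (Fin (N + 1) → Fin m → ℂ))
    (hFinf : ∀ v, Finf v = v - Fhat v)
    (K : Submodule ℂ (Fin (N + 1) → Fin m → ℂ))
    (hK : K = Submodule.pi Set.univ fun i => LinearMap.ker (B i).mulVecLin)
    (L : Submodule ℂ (Fin (N + 1) → Fin m → ℂ))
    (hL : L = LinearMap.ker Fhat) :
    Function.Surjective φ ∧
    LinearMap.ker φ = K ⊔ L ∧
    (∀ k v, φ (F k v) = (B k.succ).mulVec (φ v)) ∧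
    (∀ v, φ (Finf v) = Binf.mulVec (φ v)) ∧
    ∃ e : ((Fin (N + 1) → Fin m → ℂ) ⧸ (K ⊔ L)) ≃ₗ[ℂ] (Fin m → ℂ),
      ∀ v, e (Submodule.Quotient.mk v) = φ v := by
  -- a key computation: φ of a vector supported at one index
  have hsingle : ∀ (j : Fin (N + 1)) (y : Fin m → ℂ),
      φ (Pi.single j y) = (B j).mulVec y := by
    intro j y
    rw [hφ]
    rw [Finset.sum_eq_single j]
    · simp
    · intro i _ hij
      simp [Pi.single_eq_of_ne hij]
    · simp
  -- surjectivity
  have hsurj : Function.Surjective φ := by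
    rw [← LinearMap.range_eq_top]
    have h0 := hstar2 0 0
    simp only [zero_smul, add_zero] at h0
    rw [eq_top_iff, ← h0]
    apply sup_le
    · apply iSup_le; intro j; apply iSup_le; intro _
      rintro x ⟨y, rfl⟩
      exact ⟨Pi.single j y, hsingle j y⟩
    · rintro x ⟨y, rfl⟩
      exact ⟨Pi.single 0 y, hsingle 0 y⟩
  -- kernel
  have hLker : L = LinearMap.ker φ := by
    ext v
    simp only [hL, LinearMap.mem_ker, hFhat, hφ]
    constructor
    · intro h
      have := congrFun h 0
      simpa using this
    · intro h
      funext r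
      simpa using h
  have hker : LinearMap.ker φ = K ⊔ L := by
    apply le_antisymm
    · rw [hLker]; exact le_sup_right
    · apply sup_le
      · intro v hv
        rw [hK] at hv
        simp only [LinearMap.mem_ker, hφ]
        have : ∀ j, (B j).mulVec (v j) = 0 := by
          intro j
          exact hv j (Set.mem_univ j)
        simp [this]
      · rw [hLker]
  -- intertwining with F k
  have hintF : ∀ k v, φ (F k v) = (B k.succ).mulVec (φ v) := by
    intro k v
    rw [hF, hφ]
    rw [Finset.sum_eq_single k.succ]
    · simp [hφ]
    · intro i _ hi
      simp [hi]
    · simp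
  -- sum of all B j
  have hBsum : (∑ j, B j) = 1 - Binf := by
    rw [hB, Fin.sum_cons]
    abel
  have hintFinf : ∀ v, φ (Finf v) = Binf.mulVec (φ v) := by
    intro v
    rw [hFinf, map_sub]
    have hFh : φ (Fhat v) = (1 - Binf).mulVec (φ v) := by
      rw [hφ (Fhat v)]
      have : ∀ j : Fin (N + 1), (B j).mulVec (Fhat v j) = (B j).mulVec (φ v) := by
        intro j; rw [hFhat, hφ]
      rw [Finset.sum_congr rfl fun j _ => this j, ← hBsum]
      ext i
      simp only [Matrix.mulVec, dotProduct, Finset.sum_apply,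
        Matrix.sum_apply, Finset.sum_mul]
      rw [Finset.sum_comm]
    rw [hFh, Matrix.sub_mulVec, Matrix.one_mulVec]
    abel
  refine ⟨hsurj, hker, hintF, hintFinf, ?_⟩
  refine ⟨(Submodule.quotEquivOfEq _ _ hker.symm).trans (φ.quotKerEquivOfSurjective hsurj), ?_⟩
  intro v
  rfl
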